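/- Let 0 < β < d and let X = (x_1,…,x_N) ∈ (ℝ^d)^N. Suppose there is a constant C' > 0 such that (1/N) Σ_{i=1, i≠j}^N |x_i − x_j|^{−β} ≤ C' for every j ∈ {1,…,N}. Then X is an empirical p-Morrey measure with p = d/(d−β) and [X]_{M_p^N} ≤ C'. -/

import Mathlib

open MeasureTheory Filter Topology
open scoped ENNReal NNReal

/-- The nonnegative part of an extended real, as a value in `ℝ≥0∞`. -/
noncomputable def erealToENNReal (a : EReal) : ℝ≥0∞ :=
  if a = ⊤ then ⊤ else ENNReal.ofReal a.toReal

noncomputable section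

/-- Euclidean space ℝ^d. -/
abbrev Euc (d : ℕ) : Type := EuclideanSpace ℝ (Fin d)

/-- Signed integral of an `EReal`-valued function (positive part minus negative part). -/
noncomputable def eintegral {α : Type*} [MeasurableSpace α] (μ : Measure α) (f : α → EReal) :
    EReal :=
  ((∫⁻ x, erealToENNReal (f x) ∂μ : ℝ≥0∞) : EReal) -
    ((∫⁻ x, erealToENNReal (-f x) ∂μ : ℝ≥0∞) : EReal)

/-- Continuum interaction energy `E(ρ) = (1/2) ∬ W(x−y) dρ(x) dρ(y)`. -/
noncomputable def contEnergy {d : ℕ} (W : Euc d → EReal) (ρ : Measure (Euc d)) : EReal :=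
  (((1 : ℝ) / 2 : ℝ) : EReal) * eintegral (ρ.prod ρ) fun p => W (p.1 - p.2)

/-- Discrete interaction energy `E_N(X) = (1/(2N²)) Σ_{i≠j} W(x_i − x_j)`. -/
noncomputable def discEnergy {d : ℕ} (W : Euc d → EReal) (N : ℕ) (X : Fin N → Euc d) : EReal :=
  (((1 : ℝ) / (2 * (N : ℝ) ^ 2) : ℝ) : EReal) *
    ∑ i : Fin N, ∑ j ∈ Finset.univ.erase i, W (X i - X j)

/-- `P_i(X) = (1/N) Σ_{j≠i} W(x_i − x_j)`, the potential felt by particle `i`. -/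
noncomputable def particlePotential {d : ℕ} (W : Euc d → EReal) (N : ℕ) (X : Fin N → Euc d)
    (i : Fin N) : EReal :=
  (((N : ℝ)⁻¹ : ℝ) : EReal) * ∑ j ∈ Finset.univ.erase i, W (X i - X j)

/-- Empirical measure `μ_X = (1/N) Σ δ_{x_i}`. -/
noncomputable def empMeasure {d N : ℕ} (X : Fin N → Euc d) : Measure (Euc d) :=
  (N : ℝ≥0∞)⁻¹ • ∑ i : Fin N, Measure.dirac (X i)

/-- `X` is a global minimiser of the discrete energy `E_N`. -/
def IsDiscMinimiser {d : ℕ} (W : Euc d → EReal) (N : ℕ) (X : Fin N → Euc d) : Prop :=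
  ∀ Y : Fin N → Euc d, discEnergy W N X ≤ discEnergy W N Y

/-- `ρ` is a Borel probability measure minimising the continuum energy over all
Borel probability measures. -/
def IsContMinimiser {d : ℕ} (W : Euc d → EReal) (ρ : Measure (Euc d)) : Prop :=
  IsProbabilityMeasure ρ ∧
    ∀ ν : Measure (Euc d), IsProbabilityMeasure ν → contEnergy W ρ ≤ contEnergy W ν

/-- Narrow convergence of a sequence of measures, in duality with bounded continuous
functions. -/
def NarrowTendsto {d : ℕ} (μ : ℕ → Measure (Euc d)) (ρ : Measure (Euc d)) : Prop :=
  ∀ f : BoundedContinuousFunction (Euc d) ℝ,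
    Tendsto (fun N => ∫ x, f x ∂μ N) atTop (nhds (∫ x, f x ∂ρ))

/-- Support of a measure. -/
def measSupport {d : ℕ} (ρ : Measure (Euc d)) : Set (Euc d) :=
  {x | ∀ r : ℝ, 0 < r → 0 < ρ (Metric.ball x r)}

/-- Average of `W` over the ball of radius `ε` centred at `x`. -/
noncomputable def ballAvg {d : ℕ} (W : Euc d → EReal) (x : Euc d) (ε : ℝ) : EReal :=
  (((volume (Metric.ball x ε)).toReal⁻¹ : ℝ) : EReal) *
    eintegral (volume.restrict (Metric.ball x ε)) W

/-- Generalised Laplacian `Δ⁰W(x) = liminf_{ε→0⁺} (2(d+2)/ε²)(⨍_{B_ε(x)} W − W(x))`. -/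
noncomputable def genLap {d : ℕ} (W : Euc d → EReal) (x : Euc d) : EReal :=
  Filter.liminf
    (fun ε : ℝ => (((2 * ((d : ℝ) + 2) / ε ^ 2) : ℝ) : EReal) * (ballAvg W x ε - W x))
    (nhdsWithin (0 : ℝ) (Set.Ioi 0))

/-- Local integrability of an `EReal`-valued function. -/
def ERealLocInt {d : ℕ} (W : Euc d → EReal) : Prop :=
  ∀ K : Set (Euc d), IsCompact K →
    (∫⁻ x in K, erealToENNReal (W x)) < ⊤ ∧ (∫⁻ x in K, erealToENNReal (-W x)) < ⊤

/-- `W` is β-repulsive at the origin. -/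
def BetaRepulsive {d : ℕ} (W : Euc d → EReal) (β : ℝ) : Prop :=
  ERealLocInt W ∧
    ∃ δ : ℝ, 0 < δ ∧ ∃ C : ℝ, 0 < C ∧
      (∀ x : Euc d, 0 < ‖x‖ → ‖x‖ < δ → ((C * ‖x‖ ^ (-β) : ℝ) : EReal) ≤ -genLap W x) ∧
      genLap W (0 : Euc d) = ⊥

/-- Hypothesis (H1): `W` is lower semicontinuous, bounded below by `Wmin` and locally
integrable. -/
def Hyp1 {d : ℕ} (W : Euc d → EReal) (Wmin : ℝ) : Prop :=
  LowerSemicontinuous W ∧ (∀ x, (Wmin : EReal) ≤ W x) ∧ ERealLocInt W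

/-- Hypothesis (H2): `W(x) → Winf` as `|x| → ∞`, `W` is symmetric, and `W` is radially
strictly increasing outside the ball of radius `RW > 0`. -/
def Hyp2 {d : ℕ} (W : Euc d → EReal) (Winf : EReal) (RW : ℝ) : Prop :=
  Tendsto W (cocompact (Euc d)) (nhds Winf) ∧ (∀ x, W (-x) = W x) ∧ 0 < RW ∧
    ∀ e : Euc d, ‖e‖ = 1 → ∀ r s : ℝ, RW ≤ r → r < s → W (r • e) < W (s • e)

/-- Hypothesis (H3a): `W` is bounded from above and upper semicontinuous. -/
def Hyp3a {d : ℕ} (W : Euc d → EReal) : Prop :=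
  (∃ C : ℝ, ∀ x, W x ≤ (C : EReal)) ∧ UpperSemicontinuous W

/-- Hypothesis (H3b): `W` is β-repulsive with `2 < β < d`, is `C¹` away from the origin,
and satisfies `Δ⁰W ≤ C_W`, `W(x) ≤ C_W|x|^{2−β}` and `|∇W(x)| ≤ C_W|x|^{1−β}` for `|x| ≤ 1`. -/
def Hyp3b {d : ℕ} (W : Euc d → EReal) (β C_W : ℝ) : Prop :=
  2 < β ∧ β < d ∧ 0 < C_W ∧ BetaRepulsive W β ∧
    (∃ g : Euc d → ℝ, (∀ x : Euc d, x ≠ 0 → W x = (g x : EReal)) ∧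
      ContDiffOn ℝ 1 g {(0 : Euc d)}ᶜ ∧
      ∀ x : Euc d, x ≠ 0 → ‖x‖ ≤ 1 → ‖fderiv ℝ g x‖ ≤ C_W * ‖x‖ ^ ((1 : ℝ) - β)) ∧
    (∀ x, genLap W x ≤ (C_W : EReal)) ∧
    ∀ x : Euc d, x ≠ 0 → ‖x‖ ≤ 1 → W x ≤ ((C_W * ‖x‖ ^ ((2 : ℝ) - β) : ℝ) : EReal)

/-- `W` is unstable: some probability measure has energy `< Winf/2`. -/
def Unstable {d : ℕ} (W : Euc d → EReal) (Winf : EReal) : Prop :=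
  ∃ ρ : Measure (Euc d), IsProbabilityMeasure ρ ∧
    contEnergy W ρ < (((1 : ℝ) / 2 : ℝ) : EReal) * Winf

/-- `W` is strictly stable: every probability measure has energy `> Winf/2`. -/
def StrictlyStable {d : ℕ} (W : Euc d → EReal) (Winf : EReal) : Prop :=
  ∀ ρ : Measure (Euc d), IsProbabilityMeasure ρ →
    (((1 : ℝ) / 2 : ℝ) : EReal) * Winf < contEnergy W ρ

/-- `W` is discretely unstable. -/
def DiscUnstable {d : ℕ} (W : Euc d → EReal) (Winf : EReal) : Prop :=
  ∃ s : ℝ, 0 < s ∧ ∃ Nbar : ℕ, 2 ≤ Nbar ∧ ∀ N : ℕ, Nbar < N →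
    ∃ X : Fin N → Euc d,
      discEnergy W N X < (((1 : ℝ) / 2 : ℝ) : EReal) * Winf - (s : EReal)

/-- `W` is H-unstable. -/
def HUnstable {d : ℕ} (W : Euc d → EReal) (Winf : EReal) : Prop :=
  ∀ B : ℝ, ∃ N : ℕ, 2 ≤ N ∧ ∃ X : Fin N → Euc d,
    discEnergy W N X < (((1 : ℝ) / 2 : ℝ) : EReal) * Winf - ((B / (2 * (N : ℝ)) : ℝ) : EReal)

/-- The Morrey exponent `d/q`, where `q` is the Hölder dual of `p`. -/
def morreyExp (d : ℕ) (p : ℝ≥0∞) : ℝ := (d : ℝ) * (1 - (p⁻¹).toReal)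

end
/-- a configuration with bounded discrete Riesz potential of order `β` at every
particle is an empirical Morrey measure with exponent `β` and seminorm at most `C'`. -/
theorem empirical_morrey_of_bounded_discrete_riesz_potential
    {d : ℕ} (hd : 0 < d) (β : ℝ) (hβ0 : 0 < β) (hβd : β < d)
    (N : ℕ) (X : Fin N → Euc d) (C' : ℝ) (hC' : 0 < C')
    (h : ∀ j : Fin N,
      (N : ℝ≥0∞)⁻¹ * ∑ i ∈ Finset.univ.erase j, (‖X i - X j‖₊ : ℝ≥0∞) ^ (-β) ≤
        ENNReal.ofReal C') :
    ∀ r : ℝ, 0 < r → ∀ i : Fin N,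
      empMeasure X (Metric.ball (X i) r) ≤ ENNReal.ofReal (C' * r ^ β) + (N : ℝ≥0∞)⁻¹ := by
  classical
  intro r hr i
  set S : Finset (Fin N) :=
    (Finset.univ.erase i).filter (fun j => X j ∈ Metric.ball (X i) r) with hS
  have hball : MeasurableSet (Metric.ball (X i) r) := measurableSet_ball
  -- Step 1: measure of ball ≤ N⁻¹ * card S + N⁻¹
  have hemp : empMeasure X (Metric.ball (X i) r)
      = (N : ℝ≥0∞)⁻¹ * ∑ j : Fin N, (Metric.ball (X i) r).indicator 1 (X j) := by
    simp [empMeasure, Measure.finset_sum_apply, Measure.dirac_apply' _ hball]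
  have hsum : ∑ j : Fin N, (Metric.ball (X i) r).indicator (1 : Euc d → ℝ≥0∞) (X j)
      ≤ (S.card : ℝ≥0∞) + 1 := by
    rw [← Finset.add_sum_erase _ _ (Finset.mem_univ i)]
    have h1 : (Metric.ball (X i) r).indicator (1 : Euc d → ℝ≥0∞) (X i) ≤ 1 :=
      Set.indicator_le_self' (fun _ _ => zero_le_one) _
    have h2 : ∑ j ∈ Finset.univ.erase i,
        (Metric.ball (X i) r).indicator (1 : Euc d → ℝ≥0∞) (X j) = (S.card : ℝ≥0∞) := by
      rw [hS, Finset.card_filter]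
      push_cast
      simp [Set.indicator_apply]
    rw [h2, add_comm]
    exact add_le_add le_rfl h1
  -- Step 2: card S bound via Riesz potential
  have key : ∀ j ∈ S, (ENNReal.ofReal r) ^ (-β) ≤ (‖X j - X i‖₊ : ℝ≥0∞) ^ (-β) := by
    intro j hj
    rw [hS, Finset.mem_filter] at hj
    have hlt : ‖X j - X i‖ < r := by
      simpa [dist_eq_norm] using hj.2
    have hle : (‖X j - X i‖₊ : ℝ≥0∞) ≤ ENNReal.ofReal r := by
      rw [← enorm_eq_nnnorm, ← ofReal_norm]
      exact ENNReal.ofReal_le_ofReal hlt.le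
    rw [ENNReal.rpow_neg, ENNReal.rpow_neg]
    exact ENNReal.inv_le_inv.mpr (ENNReal.rpow_le_rpow hle hβ0.le)
  have hcard : (S.card : ℝ≥0∞) * (ENNReal.ofReal r) ^ (-β)
      ≤ ∑ j ∈ Finset.univ.erase i, (‖X j - X i‖₊ : ℝ≥0∞) ^ (-β) := by
    calc (S.card : ℝ≥0∞) * (ENNReal.ofReal r) ^ (-β)
        = ∑ _j ∈ S, (ENNReal.ofReal r) ^ (-β) := by
          rw [Finset.sum_const, nsmul_eq_mul]
      _ ≤ ∑ j ∈ S, (‖X j - X i‖₊ : ℝ≥0∞) ^ (-β) := Finset.sum_le_sum key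
      _ ≤ ∑ j ∈ Finset.univ.erase i, (‖X j - X i‖₊ : ℝ≥0∞) ^ (-β) :=
          Finset.sum_le_sum_of_subset (hS ▸ Finset.filter_subset _ _)
  have hmain : (N : ℝ≥0∞)⁻¹ * (S.card : ℝ≥0∞) * (ENNReal.ofReal r) ^ (-β)
      ≤ ENNReal.ofReal C' := by
    calc (N : ℝ≥0∞)⁻¹ * (S.card : ℝ≥0∞) * (ENNReal.ofReal r) ^ (-β)
        = (N : ℝ≥0∞)⁻¹ * ((S.card : ℝ≥0∞) * (ENNReal.ofReal r) ^ (-β)) := by ring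
      _ ≤ (N : ℝ≥0∞)⁻¹ * ∑ j ∈ Finset.univ.erase i, (‖X j - X i‖₊ : ℝ≥0∞) ^ (-β) :=
          mul_le_mul_right hcard _
      _ ≤ ENNReal.ofReal C' := h i
  -- divide by r^{-β}
  have hr0 : (ENNReal.ofReal r) ≠ 0 := by
    simp [ENNReal.ofReal_eq_zero, not_le, hr]
  have hrtop : (ENNReal.ofReal r) ≠ ⊤ := ENNReal.ofReal_ne_top
  have hrne : (ENNReal.ofReal r) ^ (β : ℝ) ≠ 0 :=
    (ENNReal.rpow_pos (lt_of_le_of_ne zero_le (Ne.symm hr0)) hrtop).ne'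
  have hrnetop : (ENNReal.ofReal r) ^ (β : ℝ) ≠ ⊤ :=
    ENNReal.rpow_ne_top_of_nonneg hβ0.le hrtop
  have hcancel : (ENNReal.ofReal r) ^ (-β) * (ENNReal.ofReal r) ^ (β : ℝ) = 1 := by
    rw [ENNReal.rpow_neg]
    exact ENNReal.inv_mul_cancel hrne hrnetop
  have hstep : (N : ℝ≥0∞)⁻¹ * (S.card : ℝ≥0∞) ≤ ENNReal.ofReal (C' * r ^ β) := by
    have := mul_le_mul_left hmain ((ENNReal.ofReal r) ^ (β : ℝ))
    rw [mul_assoc, hcancel, mul_one] at this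
    calc (N : ℝ≥0∞)⁻¹ * (S.card : ℝ≥0∞)
        ≤ ENNReal.ofReal C' * (ENNReal.ofReal r) ^ (β : ℝ) := this
      _ = ENNReal.ofReal (C' * r ^ β) := by
          rw [ENNReal.ofReal_rpow_of_pos hr, ← ENNReal.ofReal_mul hC'.le]
  calc empMeasure X (Metric.ball (X i) r)
      = (N : ℝ≥0∞)⁻¹ * ∑ j : Fin N, (Metric.ball (X i) r).indicator 1 (X j) := hemp
    _ ≤ (N : ℝ≥0∞)⁻¹ * ((S.card : ℝ≥0∞) + 1) := mul_le_mul_right hsum _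
    _ = (N : ℝ≥0∞)⁻¹ * (S.card : ℝ≥0∞) + (N : ℝ≥0∞)⁻¹ := by rw [mul_add, mul_one]
    _ ≤ ENNReal.ofReal (C' * r ^ β) + (N : ℝ≥0∞)⁻¹ := add_le_add_left hstep _
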